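/- Turnpike in the scalar integrator example is an instance of exponentially decaying sensitivity: For the linear system x_{t+1} = x_t + w_t, y_t = x_t + v_t with quadratic cost l = ŵ² + (y − x̂)², the endpoint-constrained window problems are strictly convex quadratic programs, and there exist c > 0 and ρ ∈ (0,1) such that solutions with different endpoint conditions satisfy |ζ̄_N(j, d, x^i₁, x^t₁) − ζ̄_N(j, d, x^i₂, x^t₂)| ≤ c·ρ^j·|x^i₁ − x^i₂| + c·ρ^{N−j}·|x^t₁ − x^t₂| for all j ∈ {0,...,N}. -/

import Mathlib

/-- Cost of the endpoint-constrained window problem for the scalar integrator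
`x_{t+1} = x_t + w_t`, `y_t = x_t + v_t`, after eliminating `w_j = x_{j+1} − x_j`:
`Σ_{j<N} ((x_{j+1} − x_j)² + (y_j − x_j)²) + (y_N − x_N)²`. -/
noncomputable def integratorCost (N : ℕ) (y : ℕ → ℝ) (x : Fin (N + 1) → ℝ) : ℝ :=
  (∑ j : Fin N, ((x j.succ - x j.castSucc) ^ 2 + (y j.1 - x j.castSucc) ^ 2))
    + (y N - x (Fin.last N)) ^ 2



set_option maxHeartbeats 1000000 in
lemma cost_update {N : ℕ} (y : ℕ → ℝ) (x : Fin (N+1) → ℝ) (k : ℕ) (hk : k + 2 ≤ N) (t : ℝ) :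
    integratorCost N y (Function.update x ⟨k+1, by omega⟩ (x ⟨k+1, by omega⟩ + t))
      = integratorCost N y x + 3*t^2
        + 2*t*(3 * x ⟨k+1, by omega⟩ - x ⟨k, by omega⟩ - x ⟨k+2, by omega⟩ - y (k+1)) := by
  set i : Fin (N+1) := ⟨k+1, by omega⟩ with hi
  set x' := Function.update x i (x i + t) with hx'
  set a : Fin N := ⟨k, by omega⟩ with ha
  set b : Fin N := ⟨k+1, by omega⟩ with hb
  have hab : a ≠ b := by simp [ha, hb, Fin.ext_iff]
  set F : Fin N → ℝ := fun j => (x' j.succ - x' j.castSucc) ^ 2 + (y j.1 - x' j.castSucc) ^ 2 with hF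
  set G : Fin N → ℝ := fun j => (x j.succ - x j.castSucc) ^ 2 + (y j.1 - x j.castSucc) ^ 2 with hG
  have hFG : ∀ j : Fin N, j ≠ a → j ≠ b → F j - G j = 0 := by
    intro j hja hjb
    have hja' : (j:ℕ) ≠ k := fun h => hja (Fin.ext h)
    have hjb' : (j:ℕ) ≠ k+1 := fun h => hjb (Fin.ext h)
    have h1 : j.succ ≠ i := by
      intro h
      have hv : (j:ℕ) + 1 = k + 1 := by simpa [hi] using congrArg Fin.val h
      exact hja' (by omega)
    have h2 : j.castSucc ≠ i := by
      intro h
      have hv : (j:ℕ) = k + 1 := by simpa [hi] using congrArg Fin.val h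
      exact hjb' hv
    simp [hF, hG, hx', Function.update_of_ne h1, Function.update_of_ne h2]
  have hsum : (∑ j : Fin N, (F j - G j)) = (F a - G a) + (F b - G b) := by
    rw [← Finset.sum_subset (Finset.subset_univ ({a, b} : Finset (Fin N)))
      (fun j _ hj => by
        simp only [Finset.mem_insert, Finset.mem_singleton, not_or] at hj
        exact hFG j hj.1 hj.2)]
    rw [Finset.sum_pair hab]
  have hasucc : a.succ = i := by simp [ha, hi, Fin.ext_iff]
  have hacast : a.castSucc ≠ i := by simp [ha, hi, Fin.ext_iff]
  have hbsucc : b.succ ≠ i := by simp [hb, hi, Fin.ext_iff]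
  have hbcast : b.castSucc = i := by simp [hb, hi, Fin.ext_iff]
  have hlast : Fin.last N ≠ i := by simp [hi, Fin.ext_iff]; omega
  have e1 : x' a.succ = x i + t := by rw [hx', hasucc]; exact Function.update_self _ _ _
  have e2 : x' a.castSucc = x a.castSucc := by rw [hx']; exact Function.update_of_ne hacast _ _
  have e3 : x' b.succ = x b.succ := by rw [hx']; exact Function.update_of_ne hbsucc _ _
  have e4 : x' b.castSucc = x i + t := by rw [hx', hbcast]; exact Function.update_self _ _ _
  have eL : x' (Fin.last N) = x (Fin.last N) := by rw [hx']; exact Function.update_of_ne hlast _ _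
  have hFa : F a - G a = (x i + t - x a.castSucc)^2 - (x i - x a.castSucc)^2 := by
    have : x a.succ = x i := by rw [hasucc]
    simp only [hF, hG, e1, e2, this]
    ring
  have hFb : F b - G b =
      (x b.succ - (x i + t))^2 - (x b.succ - x i)^2
      + ((y (k+1) - (x i + t))^2 - (y (k+1) - x i)^2) := by
    have hyb : ((b:ℕ) : ℕ) = k+1 := rfl
    have : x b.castSucc = x i := by rw [hbcast]
    simp only [hF, hG, e3, e4, this, hyb]
    ring
  have expand : integratorCost N y x' - integratorCost N y x = ∑ j : Fin N, (F j - G j) := by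
    have c1 : integratorCost N y x' = (∑ j : Fin N, F j) + (y N - x' (Fin.last N))^2 := rfl
    have c2 : integratorCost N y x = (∑ j : Fin N, G j) + (y N - x (Fin.last N))^2 := rfl
    rw [c1, c2, eL, Finset.sum_sub_distrib]
    ring
  rw [hsum, hFa, hFb] at expand
  have hxa : x a.castSucc = x ⟨k, by omega⟩ := rfl
  have hxb : x b.succ = x ⟨k+2, by omega⟩ := rfl
  have hxi : x i = x ⟨k+1, by omega⟩ := rfl
  rw [hxa, hxb, hxi] at expand
  linear_combination expand

lemma integrator_stationary {N : ℕ} (y : ℕ → ℝ) (x : Fin (N+1) → ℝ)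
    (hmin : ∀ x' : Fin (N+1) → ℝ, x' 0 = x 0 → x' (Fin.last N) = x (Fin.last N) →
      integratorCost N y x ≤ integratorCost N y x')
    (k : ℕ) (hk : k + 2 ≤ N) :
    x ⟨k, by omega⟩ + x ⟨k+2, by omega⟩ = 3 * x ⟨k+1, by omega⟩ - y (k+1) := by
  have key : ∀ t : ℝ, 0 ≤ 3*t^2 + 2*t*(3 * x ⟨k+1, by omega⟩ - x ⟨k, by omega⟩
      - x ⟨k+2, by omega⟩ - y (k+1)) := by
    intro t
    have h0 : (Function.update x ⟨k+1, by omega⟩ (x ⟨k+1, by omega⟩ + t)) 0 = x 0 := by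
      apply Function.update_of_ne
      simp [Fin.ext_iff]
    have hL : (Function.update x ⟨k+1, by omega⟩ (x ⟨k+1, by omega⟩ + t)) (Fin.last N)
        = x (Fin.last N) := by
      apply Function.update_of_ne
      simp [Fin.ext_iff]; omega
    have := hmin _ h0 hL
    rw [cost_update y x k hk t] at this
    linarith
  have haux : ∀ G : ℝ, 0 ≤ 3*(-(G/3))^2 + 2*(-(G/3))*G → G = 0 := by
    intro G h; nlinarith [sq_nonneg G]
  have hG0 := haux _ (key (-((3 * x ⟨k+1, by omega⟩ - x ⟨k, by omega⟩
      - x ⟨k+2, by omega⟩ - y (k+1))/3)))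
  linarith [hG0]

/-- minimum principle for the recurrence -/
lemma min_principle (N : ℕ) (e : ℕ → ℝ)
    (hrec : ∀ k, k + 2 ≤ N → e k + e (k+2) = 3 * e (k+1))
    (h0 : 0 ≤ e 0) (hN : 0 ≤ e N) :
    ∀ n ≤ N, 0 ≤ e n := by
  by_contra hcon
  push_neg at hcon
  obtain ⟨n, hn, hneg⟩ := hcon
  obtain ⟨m, hm, hmin⟩ := Finset.exists_min_image (Finset.range (N+1)) e ⟨n, by
    simp [Finset.mem_range]; omega⟩
  simp only [Finset.mem_range] at hm
  have hmn : e m ≤ e n := hmin n (by simp [Finset.mem_range]; omega)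
  have hmneg : e m < 0 := lt_of_le_of_lt hmn hneg
  have hm0 : m ≠ 0 := by rintro rfl; linarith
  have hmN : m ≠ N := by rintro rfl; linarith
  obtain ⟨j, rfl⟩ : ∃ j, m = j + 1 := ⟨m - 1, by omega⟩
  have hrecj := hrec j (by omega)
  have h1 : e (j+1) ≤ e j := hmin j (by simp [Finset.mem_range]; omega)
  have h2 : e (j+1) ≤ e (j+2) := hmin (j+2) (by simp [Finset.mem_range]; omega)
  linarith

lemma integrator_strictConvexOn (N : ℕ) (y : ℕ → ℝ) :
    StrictConvexOn ℝ Set.univ (integratorCost N y) := by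
  refine ⟨convex_univ, ?_⟩
  intro p _ q _ hpq a b ha hb hab
  have hb' : b = 1 - a := by linarith
  subst hb'
  set dterm : Fin N → ℝ := fun j =>
    ((p j.succ - p j.castSucc) - (q j.succ - q j.castSucc))^2
      + (p j.castSucc - q j.castSucc)^2 with hdterm
  set Dsum := ∑ j : Fin N, dterm j with hDsum
  set Ld := (p (Fin.last N) - q (Fin.last N))^2 with hLd
  -- the per-term convexity identity
  have hS : (∑ j : Fin N,
      (a * ((p j.succ - p j.castSucc) ^ 2 + (y j.1 - p j.castSucc) ^ 2)
        + (1-a) * ((q j.succ - q j.castSucc) ^ 2 + (y j.1 - q j.castSucc) ^ 2)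
        - (((a • p + (1-a) • q) j.succ - (a • p + (1-a) • q) j.castSucc) ^ 2
            + (y j.1 - (a • p + (1-a) • q) j.castSucc) ^ 2)
        - a*(1-a)*dterm j)) = 0 := by
    apply Finset.sum_eq_zero
    intro j _
    simp only [Pi.add_apply, Pi.smul_apply, smul_eq_mul, hdterm]
    ring
  rw [Finset.sum_sub_distrib, Finset.sum_sub_distrib, Finset.sum_add_distrib,
      ← Finset.mul_sum, ← Finset.mul_sum, ← Finset.mul_sum] at hS
  -- positivity of the discrepancy
  have hdnonneg : ∀ j : Fin N, 0 ≤ dterm j := by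
    intro j; simp only [hdterm]; positivity
  have hDpos : 0 < Dsum + Ld := by
    obtain ⟨k, hk⟩ := Function.ne_iff.mp hpq
    have hDnn : 0 ≤ Dsum := Finset.sum_nonneg fun j _ => hdnonneg j
    have hLnn : 0 ≤ Ld := by simp only [hLd]; positivity
    rcases eq_or_lt_of_le (Nat.lt_succ_iff.mp k.isLt) with hkN | hkN
    · have hkl : k = Fin.last N := Fin.ext hkN
      have : p (Fin.last N) - q (Fin.last N) ≠ 0 := sub_ne_zero.mpr (hkl ▸ hk)
      have : 0 < Ld := by simp only [hLd]; positivity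
      linarith
    · set j0 : Fin N := ⟨k.1, hkN⟩ with hj0
      have hcast : j0.castSucc = k := by simp [hj0, Fin.ext_iff]
      have h1 : p j0.castSucc - q j0.castSucc ≠ 0 := by
        rw [hcast]; exact sub_ne_zero.mpr hk
      have h2 : 0 < dterm j0 := by
        simp only [hdterm]
        have : 0 < (p j0.castSucc - q j0.castSucc)^2 := by positivity
        nlinarith [sq_nonneg ((p j0.succ - p j0.castSucc) - (q j0.succ - q j0.castSucc))]
      have h3 : dterm j0 ≤ Dsum :=
        Finset.single_le_sum (fun j _ => hdnonneg j) (Finset.mem_univ j0)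
      linarith
  -- last-term identity
  have hlast : a * (y N - p (Fin.last N))^2 + (1-a) * (y N - q (Fin.last N))^2
      - (y N - (a • p + (1-a) • q) (Fin.last N))^2 - a*(1-a)*Ld = 0 := by
    simp only [Pi.add_apply, Pi.smul_apply, smul_eq_mul, hLd]
    ring
  have habpos : 0 < a * (1-a) := mul_pos ha hb
  -- conclude
  have goalineq : integratorCost N y (a • p + (1-a) • q)
      < a * integratorCost N y p + (1-a) * integratorCost N y q := by
    unfold integratorCost
    nlinarith [mul_pos habpos hDpos]
  simpa [smul_eq_mul] using goalineq

/-- **Exponentially decaying sensitivity in the scalar integrator example**: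
the endpoint-constrained window problems are strictly convex quadratic
programs, and there exist `c > 0` and `ρ ∈ (0,1)` such that minimizers with
different endpoint conditions satisfy
`|x₁_j − x₂_j| ≤ c·ρ^j·|xi₁ − xi₂| + c·ρ^{N−j}·|xt₁ − xt₂|` for all
`j ∈ {0,…,N}`, uniformly in `N` and in the data `y`. -/
theorem integrator_decaying_sensitivity :
    (∀ (N : ℕ) (y : ℕ → ℝ), StrictConvexOn ℝ Set.univ (integratorCost N y)) ∧
    ∃ c > (0:ℝ), ∃ ρ ∈ Set.Ioo (0:ℝ) 1,
      ∀ (N : ℕ) (y : ℕ → ℝ) (xi1 xt1 xi2 xt2 : ℝ) (x1 x2 : Fin (N + 1) → ℝ),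
        x1 0 = xi1 → x1 (Fin.last N) = xt1 →
        x2 0 = xi2 → x2 (Fin.last N) = xt2 →
        (∀ x : Fin (N + 1) → ℝ, x 0 = xi1 → x (Fin.last N) = xt1 →
          integratorCost N y x1 ≤ integratorCost N y x) →
        (∀ x : Fin (N + 1) → ℝ, x 0 = xi2 → x (Fin.last N) = xt2 →
          integratorCost N y x2 ≤ integratorCost N y x) →
        ∀ j : Fin (N + 1), |x1 j - x2 j| ≤
          c * ρ ^ (j : ℕ) * |xi1 - xi2| + c * ρ ^ (N - (j : ℕ)) * |xt1 - xt2| := by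
  constructor
  · exact integrator_strictConvexOn
  refine ⟨1, one_pos, (3 - Real.sqrt 5)/2, ?_, ?_⟩
  · constructor
    · nlinarith [Real.sq_sqrt (by norm_num : (5:ℝ) ≥ 0), Real.sqrt_nonneg 5]
    · nlinarith [Real.sq_sqrt (by norm_num : (5:ℝ) ≥ 0), Real.sqrt_nonneg 5]
  set ρ : ℝ := (3 - Real.sqrt 5)/2 with hρdef
  have hρrec : ρ^2 + 1 = 3 * ρ := by
    rw [hρdef]
    nlinarith [Real.sq_sqrt (by norm_num : (5:ℝ) ≥ 0)]
  have hρpos : 0 < ρ := by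
    rw [hρdef]
    nlinarith [Real.sq_sqrt (by norm_num : (5:ℝ) ≥ 0), Real.sqrt_nonneg 5]
  intro N y xi1 xt1 xi2 xt2 x1 x2 h10 h1L h20 h2L hmin1 hmin2
  -- the difference sequence
  set D : ℕ → ℝ := fun n => if h : n ≤ N then x1 ⟨n, by omega⟩ - x2 ⟨n, by omega⟩ else 0
    with hD
  have hDval : ∀ (n : ℕ) (h : n ≤ N), D n = x1 ⟨n, by omega⟩ - x2 ⟨n, by omega⟩ := by
    intro n h; rw [hD]; simp [h]
  -- stationarity of each minimizer gives the recurrence for D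
  have hrecD : ∀ k, k + 2 ≤ N → D k + D (k+2) = 3 * D (k+1) := by
    intro k hk
    have hs1 := integrator_stationary y x1
      (fun x' h0 hL => hmin1 x' (by rw [h0, h10]) (by rw [hL, h1L])) k hk
    have hs2 := integrator_stationary y x2
      (fun x' h0 hL => hmin2 x' (by rw [h0, h20]) (by rw [hL, h2L])) k hk
    rw [hDval k (by omega), hDval (k+2) (by omega), hDval (k+1) (by omega)]
    linarith [hs1, hs2]
  -- the comparison sequence
  set g : ℕ → ℝ := fun n => ρ^n * |xi1 - xi2| + ρ^(N-n) * |xt1 - xt2| with hg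
  have hrecg : ∀ k, k + 2 ≤ N → g k + g (k+2) = 3 * g (k+1) := by
    intro k hk
    obtain ⟨m, hm⟩ : ∃ m, N - (k+2) = m := ⟨N - (k+2), rfl⟩
    have e1 : N - k = m + 2 := by omega
    have e2 : N - (k+1) = m + 1 := by omega
    rw [hg]
    simp only [hm, e1, e2]
    have p1 : ρ^k + ρ^(k+2) = 3 * ρ^(k+1) := by
      simp only [pow_succ]
      linear_combination ρ^k * hρrec
    have p2 : ρ^(m+2) + ρ^m = 3 * ρ^(m+1) := by
      simp only [pow_succ]
      linear_combination ρ^m * hρrec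
    nlinarith [p1, p2, abs_nonneg (xi1 - xi2), abs_nonneg (xt1 - xt2)]
  -- boundary values of D
  have hD0 : D 0 = xi1 - xi2 := by
    rw [hDval 0 (by omega)]
    have e1 : (⟨0, by omega⟩ : Fin (N+1)) = 0 := rfl
    rw [e1, h10, h20]
  have hDN : D N = xt1 - xt2 := by
    rw [hDval N (by omega)]
    have e1 : (⟨N, by omega⟩ : Fin (N+1)) = Fin.last N := rfl
    rw [e1, h1L, h2L]
  have hρN : (0:ℝ) ≤ ρ^N := le_of_lt (pow_pos hρpos N)
  -- min principle applied to g - D and g + D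
  have habs : ∀ n ≤ N, |D n| ≤ g n := by
    intro n hn
    have m1 := min_principle N (fun n => g n - D n)
      (fun k hk => by linarith [hrecg k hk, hrecD k hk])
      (by simp only [hg, hD0, pow_zero, Nat.sub_zero, one_mul]
          nlinarith [le_abs_self (xi1 - xi2), abs_nonneg (xt1 - xt2)])
      (by simp only [hg, hDN, pow_zero, Nat.sub_self, one_mul]
          nlinarith [le_abs_self (xt1 - xt2), abs_nonneg (xi1 - xi2), pow_pos hρpos N])
      n hn
    have m2 := min_principle N (fun n => g n + D n)
      (fun k hk => by linarith [hrecg k hk, hrecD k hk])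
      (by simp only [hg, hD0, pow_zero, Nat.sub_zero, one_mul]
          nlinarith [neg_abs_le (xi1 - xi2), abs_nonneg (xt1 - xt2)])
      (by simp only [hg, hDN, pow_zero, Nat.sub_self, one_mul]
          nlinarith [neg_abs_le (xt1 - xt2), abs_nonneg (xi1 - xi2), pow_pos hρpos N])
      n hn
    rw [abs_le]; constructor <;> linarith
  intro j
  have hj : (j : ℕ) ≤ N := Nat.lt_succ_iff.mp j.isLt
  have := habs j hj
  rw [hDval j hj] at this
  have hje : (⟨(j:ℕ), by omega⟩ : Fin (N+1)) = j := Fin.ext rfl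
  rw [hje] at this
  simpa [hg, one_mul] using this
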